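/- Bernoulli measures / Lebesgue singular functions (Example 2.1 (ii)): Let m ≥ 2, a_0,…,a_{m−1} ∈ (0,1) with ∑_{i=0}^{m−1} a_i = 1, and f_i(x) = a_i x + ∑_{j<i} a_j on X = [0,1]. For the unique continuous solution G of de Rham's equation: α = −(1/m) ∑_{i=0}^{m−1} log_m a_i, one has α ≥ 1 with equality if and only if a_i = 1/m for every i, and if a_i ≠ 1/m for some i then G′(t) = 0 for Lebesgue-a.e. t ∈ (0,1), i.e. G is a singular function. -/

import Mathlib

open MeasureTheory Filter Set Topology

noncomputable section

/-- The first digit `A₁(t) = ⌊m t⌋` of the `m`-adic expansion of `t ∈ [0,1)`. -/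
def A1 (m : ℕ) (t : ℝ) : ℕ := (⌊(m : ℝ) * t⌋).toNat

/-- The shift map `Ht = m t - ⌊m t⌋` on `[0,1)`. -/
def Hmap (m : ℕ) (t : ℝ) : ℝ := (m : ℝ) * t - ⌊(m : ℝ) * t⌋

/-- The maps `f_i(x) = a_i x + ∑_{j<i} a_j` of Example 2.1 (ii). -/
def fBern (a : ℕ → ℝ) : ℕ → ℝ → ℝ := fun i x => a i * x + ∑ j ∈ Finset.range i, a j

/-- `α = ∫₀¹ -log_m |f'_{A₁(t)}(G(Ht))| dt` for the Bernoulli system. -/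
def alphaBern (m : ℕ) (a : ℕ → ℝ) (G : ℝ → ℝ) : ℝ :=
  ∫ t in Set.Ico (0 : ℝ) 1, -Real.logb m |deriv (fBern a (A1 m t)) (G (Hmap m t))|

end

open scoped ENNReal NNReal

namespace BernAux

noncomputable def mu (m : ℕ) (a : ℕ → ℝ) : ℕ → ℕ → ℝ
  | 0, _ => 1
  | n+1, k => a (k / m^n) * mu m a n (k % m^n)

variable {m : ℕ} {a : ℕ → ℝ}

lemma div_lt_of_lt_pow_succ (hm : 2 ≤ m) {n k : ℕ} (hk : k < m^(n+1)) : k / m^n < m := by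
  have hmn : 0 < m^n := Nat.pow_pos (by omega)
  rw [Nat.div_lt_iff_lt_mul hmn]
  calc k < m^(n+1) := hk
  _ = m * m^n := by ring

lemma mod_lt_pow (hm : 2 ≤ m) (n k : ℕ) : k % m^n < m^n :=
  Nat.mod_lt _ (Nat.pow_pos (by omega))

lemma mu_pos (hm : 2 ≤ m) (ha : ∀ i < m, 0 < a i) :
    ∀ n k, k < m^n → 0 < mu m a n k := by
  intro n
  induction n with
  | zero => intro k hk; simp [mu]
  | succ n ih =>
    intro k hk
    exact mul_pos (ha _ (div_lt_of_lt_pow_succ hm hk)) (ih _ (mod_lt_pow hm n k))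

lemma sum_sqrt_mu (hm : 2 ≤ m) (ha : ∀ i < m, 0 < a i) :
    ∀ n, ∑ k ∈ Finset.range (m^n), Real.sqrt (mu m a n k)
      = (∑ i ∈ Finset.range m, Real.sqrt (a i))^n := by
  intro n
  induction n with
  | zero => simp [mu]
  | succ n ih =>
    have hstep : ∑ k ∈ Finset.range (m^(n+1)), Real.sqrt (mu m a (n+1) k)
        = (∑ i ∈ Finset.range m, Real.sqrt (a i)) * ∑ k ∈ Finset.range (m^n), Real.sqrt (mu m a n k) := by
      rw [Finset.sum_mul_sum, ← Finset.sum_product']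
      apply Finset.sum_nbij' (fun k => (k / m^n, k % m^n)) (fun p => p.1 * m^n + p.2)
      · intro k hk
        simp only [Finset.mem_range] at hk
        simp only [Finset.mem_product, Finset.mem_range]
        exact ⟨div_lt_of_lt_pow_succ hm hk, mod_lt_pow hm n k⟩
      · intro p hp
        simp only [Finset.mem_product, Finset.mem_range] at hp
        simp only [Finset.mem_range, pow_succ]
        have := hp.2
        calc p.1 * m^n + p.2 < p.1 * m^n + m^n := by omega
        _ = (p.1 + 1) * m^n := by ring
        _ ≤ m * m^n := Nat.mul_le_mul_right _ (by omega)
        _ = m^n * m := by ring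
      · intro k hk
        exact Nat.div_add_mod' k (m^n)
      · intro p hp
        simp only [Finset.mem_product, Finset.mem_range] at hp
        have hmn : 0 < m^n := Nat.pow_pos (by omega)
        have h1 : (p.1 * m^n + p.2) / m^n = p.1 := by
          rw [mul_comm, Nat.mul_add_div hmn, Nat.div_eq_of_lt hp.2]
          omega
        have h2 : (p.1 * m^n + p.2) % m^n = p.2 := by
          rw [mul_comm, Nat.mul_add_mod, Nat.mod_eq_of_lt hp.2]
        show (_ / m^n, _ % m^n) = p
        rw [h1, h2]
      · intro k hk
        simp only [Finset.mem_range] at hk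
        simp only [mu]
        exact Real.sqrt_mul (ha _ (div_lt_of_lt_pow_succ hm hk)).le _
    rw [hstep, ih, ← pow_succ']

lemma sqrt_pow_nat {x : ℝ} (hx : 0 ≤ x) (n : ℕ) : Real.sqrt (x^n) = (Real.sqrt x)^n := by
  induction n with
  | zero => simp
  | succ n ih => rw [pow_succ, pow_succ, Real.sqrt_mul (by positivity), ih]

lemma ae_tendsto_Mn (hm : 2 ≤ m) (ha : ∀ i < m, a i ∈ Set.Ioo (0 : ℝ) 1)
    (hS : ∑ i ∈ Finset.range m, Real.sqrt (a i) < Real.sqrt m) :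
    ∀ᵐ t ∂(volume.restrict (Set.Ioo (0:ℝ) 1)),
      Filter.Tendsto (fun n => mu m a n ⌊(m:ℝ)^n * t⌋₊ * (m:ℝ)^n) atTop (𝓝 0) := by
  have hM : (0:ℝ) < (m:ℝ) := by exact_mod_cast (by omega : 0 < m)
  have hsqM : (0:ℝ) < Real.sqrt m := Real.sqrt_pos.2 hM
  set S := ∑ i ∈ Finset.range m, Real.sqrt (a i) with hSdef
  have hS0 : 0 ≤ S := Finset.sum_nonneg fun i _ => Real.sqrt_nonneg _
  set r := S / Real.sqrt m with hrdef
  have hr0 : 0 ≤ r := by positivity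
  have hr1 : r < 1 := (div_lt_one hsqM).2 hS
  set f : ℕ → ℝ → ℝ≥0∞ := fun n t =>
    ENNReal.ofReal (Real.sqrt (mu m a n ⌊(m:ℝ)^n * t⌋₊ * (m:ℝ)^n)) with hfdef
  have hfm : ∀ n, Measurable (f n) := by
    intro n
    apply Measurable.ennreal_ofReal
    apply Real.continuous_sqrt.measurable.comp
    apply Measurable.mul _ measurable_const
    exact measurable_from_nat.comp ((measurable_const.mul measurable_id).nat_floor)
  have hint : ∀ n, ∫⁻ t in Set.Ioo (0:ℝ) 1, f n t ≤ ENNReal.ofReal (r^n) := by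
    intro n
    have hMn : (0:ℝ) < (m:ℝ)^n := by positivity
    have hcover : Set.Ioo (0:ℝ) 1 ⊆ ⋃ k ∈ Finset.range (m^n),
        Set.Ico ((k:ℝ)/(m:ℝ)^n) (((k:ℝ)+1)/(m:ℝ)^n) := by
      intro t ht
      have ht0 : (0:ℝ) ≤ (m:ℝ)^n * t := by nlinarith [ht.1]
      have hfl : ⌊(m:ℝ)^n * t⌋₊ < m^n := by
        rw [Nat.floor_lt ht0]
        push_cast
        nlinarith [ht.2]
      simp only [Set.mem_iUnion, Finset.mem_range]
      refine ⟨⌊(m:ℝ)^n * t⌋₊, hfl, ?_, ?_⟩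
      · rw [div_le_iff₀ hMn]; have := Nat.floor_le ht0; linarith
      · rw [lt_div_iff₀ hMn]; have := Nat.lt_floor_add_one ((m:ℝ)^n * t); linarith
    have hdisj : ∀ j k : ℕ, j < k →
        Disjoint (Set.Ico ((j:ℝ)/(m:ℝ)^n) (((j:ℝ)+1)/(m:ℝ)^n))
          (Set.Ico ((k:ℝ)/(m:ℝ)^n) (((k:ℝ)+1)/(m:ℝ)^n)) := by
      intro j k h
      rw [Set.disjoint_left]
      rintro x ⟨_, hx2⟩ ⟨hx3, _⟩
      have hjk : ((j:ℝ)+1)/(m:ℝ)^n ≤ (k:ℝ)/(m:ℝ)^n := by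
        gcongr
        exact_mod_cast h
      linarith
    calc ∫⁻ t in Set.Ioo (0:ℝ) 1, f n t
        ≤ ∫⁻ t in ⋃ k ∈ Finset.range (m^n), Set.Ico ((k:ℝ)/(m:ℝ)^n) (((k:ℝ)+1)/(m:ℝ)^n), f n t :=
          lintegral_mono_set hcover
    _ = ∑ k ∈ Finset.range (m^n), ∫⁻ t in Set.Ico ((k:ℝ)/(m:ℝ)^n) (((k:ℝ)+1)/(m:ℝ)^n), f n t := by
          apply lintegral_biUnion_finset _ (fun k _ => measurableSet_Ico)
          intro j hj k hk hjk
          simp only [Function.onFun]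
          rcases hjk.lt_or_gt with h | h
          · exact hdisj j k h
          · exact (hdisj k j h).symm
    _ = ∑ k ∈ Finset.range (m^n),
          ENNReal.ofReal (Real.sqrt (mu m a n k * (m:ℝ)^n)) * ENNReal.ofReal (1/(m:ℝ)^n) := by
          apply Finset.sum_congr rfl
          intro k hk
          have hptwise : ∀ t ∈ Set.Ico ((k:ℝ)/(m:ℝ)^n) (((k:ℝ)+1)/(m:ℝ)^n),
              f n t = ENNReal.ofReal (Real.sqrt (mu m a n k * (m:ℝ)^n)) := by
            intro t ht
            have h1 : (k:ℝ) ≤ (m:ℝ)^n * t := by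
              have := ht.1
              rw [div_le_iff₀ hMn] at this
              linarith
            have h2 : (m:ℝ)^n * t < (k:ℝ) + 1 := by
              have := ht.2
              rw [lt_div_iff₀ hMn] at this
              linarith
            have h0 : (0:ℝ) ≤ (m:ℝ)^n * t := le_trans (by positivity) h1
            have hfl : ⌊(m:ℝ)^n * t⌋₊ = k := by
              rw [Nat.floor_eq_iff h0]
              exact ⟨h1, h2⟩
            simp only [hfdef, hfl]
          rw [setLIntegral_congr_fun measurableSet_Ico hptwise,
            setLIntegral_const, Real.volume_Ico]
          congr 1
          rw [show ((k:ℝ)+1)/(m:ℝ)^n - (k:ℝ)/(m:ℝ)^n = 1/(m:ℝ)^n by field_simp; ring]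
    _ = ENNReal.ofReal (r^n) := by
          have hterm : ∀ k ∈ Finset.range (m^n),
              ENNReal.ofReal (Real.sqrt (mu m a n k * (m:ℝ)^n)) * ENNReal.ofReal (1/(m:ℝ)^n)
              = ENNReal.ofReal (Real.sqrt (mu m a n k) * (Real.sqrt ((m:ℝ)^n) / (m:ℝ)^n)) := by
            intro k hk
            rw [← ENNReal.ofReal_mul (by positivity)]
            congr 1
            rw [Real.sqrt_mul (mu_pos hm (fun i hi => (ha i hi).1) n k (Finset.mem_range.1 hk)).le]
            ring
          rw [Finset.sum_congr rfl hterm,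
            ← ENNReal.ofReal_sum_of_nonneg (fun k _ => by positivity)]
          congr 1
          rw [← Finset.sum_mul, sum_sqrt_mu hm (fun i hi => (ha i hi).1) n,
            sqrt_pow_nat hM.le]
          have hsq0 : (Real.sqrt (m:ℝ))^n ≠ 0 := by positivity
          have hss : (Real.sqrt (m:ℝ))^n * (Real.sqrt (m:ℝ))^n = (m:ℝ)^n := by
            rw [← mul_pow, Real.mul_self_sqrt hM.le]
          rw [hrdef, div_pow, ← hSdef, eq_div_iff hsq0]
          field_simp
          linear_combination (S^n) * hss
  have hgeo : (∑' n : ℕ, ENNReal.ofReal (r^n)) ≠ ⊤ := by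
    rw [← ENNReal.ofReal_tsum_of_nonneg (fun n => by positivity)
      (summable_geometric_of_lt_one hr0 hr1)]
    exact ENNReal.ofReal_ne_top
  have hsum_ne : (∑' n, ∫⁻ t in Set.Ioo (0:ℝ) 1, f n t) ≠ ⊤ :=
    ne_top_of_le_ne_top hgeo (ENNReal.tsum_le_tsum hint)
  have hlt := lintegral_tsum (μ := volume.restrict (Set.Ioo (0:ℝ) 1))
    (fun n => (hfm n).aemeasurable)
  have hae : ∀ᵐ t ∂(volume.restrict (Set.Ioo (0:ℝ) 1)), (∑' n, f n t) < ⊤ := by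
    apply ae_lt_top (Measurable.ennreal_tsum hfm)
    rw [hlt]; exact hsum_ne
  filter_upwards [hae, ae_restrict_mem measurableSet_Ioo] with t hft ht
  have hk : ∀ n : ℕ, ⌊(m:ℝ)^n * t⌋₊ < m^n := by
    intro n
    have hMn : (0:ℝ) < (m:ℝ)^n := by positivity
    rw [Nat.floor_lt (by nlinarith [ht.1] : (0:ℝ) ≤ (m:ℝ)^n * t)]
    push_cast
    nlinarith [ht.2]
  have hMpos : ∀ n : ℕ, 0 < mu m a n ⌊(m:ℝ)^n * t⌋₊ * (m:ℝ)^n := by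
    intro n
    have hMn : (0:ℝ) < (m:ℝ)^n := by positivity
    exact mul_pos (mu_pos hm (fun i hi => (ha i hi).1) n _ (hk n)) hMn
  have h1 : Filter.Tendsto (fun n => f n t) atTop (𝓝 0) :=
    ENNReal.tendsto_atTop_zero_of_tsum_ne_top hft.ne
  have h2 : Filter.Tendsto (fun n => Real.sqrt (mu m a n ⌊(m:ℝ)^n * t⌋₊ * (m:ℝ)^n)) atTop (𝓝 0) := by
    have h3 : Filter.Tendsto (fun n => (f n t).toReal) atTop (𝓝 0) := by
      simpa [Function.comp_def] using (ENNReal.tendsto_toReal (by simp : (0:ℝ≥0∞) ≠ ⊤)).comp h1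
    have heq : (fun n => Real.sqrt (mu m a n ⌊(m:ℝ)^n * t⌋₊ * (m:ℝ)^n))
        = fun n => (f n t).toReal := by
      funext n
      simp only [hfdef]
      rw [ENNReal.toReal_ofReal (Real.sqrt_nonneg _)]
    rw [heq]; exact h3
  have h4 := h2.mul h2
  rw [mul_zero] at h4
  have heq2 : (fun n => mu m a n ⌊(m:ℝ)^n * t⌋₊ * (m:ℝ)^n)
      = fun n => Real.sqrt (mu m a n ⌊(m:ℝ)^n * t⌋₊ * (m:ℝ)^n)
        * Real.sqrt (mu m a n ⌊(m:ℝ)^n * t⌋₊ * (m:ℝ)^n) := by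
    funext n
    rw [Real.mul_self_sqrt (hMpos n).le]
  rw [heq2]
  exact h4


variable {G : ℝ → ℝ}

lemma key (hm : 2 ≤ m)
    (hGeq : ∀ i < m, ∀ t : ℝ, (i : ℝ) / m ≤ t → t ≤ ((i : ℝ) + 1) / m →
      G t = fBern a i (G ((m : ℝ) * t - i)))
    (hG0 : G 0 = 0) :
    ∀ n k, k < m^n → ∀ t, (k:ℝ)/(m:ℝ)^n ≤ t → t ≤ ((k:ℝ)+1)/(m:ℝ)^n →
      G t = mu m a n k * G ((m:ℝ)^n * t - k) + G ((k:ℝ)/(m:ℝ)^n) := by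
  have hM : (0:ℝ) < (m:ℝ) := by exact_mod_cast (by omega : 0 < m)
  intro n
  induction n with
  | zero =>
    intro k hk t ht ht'
    have hk0 : k = 0 := by simpa using hk
    subst hk0
    simp [mu, hG0]
  | succ n ih =>
    intro k hk t ht ht'
    have hMn : (0:ℝ) < (m:ℝ)^n := by positivity
    have hMn1 : (0:ℝ) < (m:ℝ)^(n+1) := by positivity
    set i := k / m^n with hi
    set k' := k % m^n with hk'def
    have him : i < m := div_lt_of_lt_pow_succ hm hk
    have hk'n : k' < m^n := mod_lt_pow hm n k
    have hik : k = i * m^n + k' := (Nat.div_add_mod' k (m^n)).symm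
    have hikR : (k:ℝ) = (i:ℝ) * (m:ℝ)^n + (k':ℝ) := by
      rw [hik]; push_cast; ring
    have hk'R : (k':ℝ) + 1 ≤ (m:ℝ)^n := by
      have : (k' + 1 : ℕ) ≤ m^n := hk'n
      exact_mod_cast this
    have hps : ((m:ℝ))^(n+1) = (m:ℝ)^n * m := by ring
    -- t is in [i/m, (i+1)/m]
    have htk : (k:ℝ) ≤ (m:ℝ)^(n+1) * t := by
      rw [div_le_iff₀ hMn1] at ht; linarith [ht]
    have htk' : (m:ℝ)^(n+1) * t ≤ (k:ℝ) + 1 := by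
      rw [le_div_iff₀ hMn1] at ht'; linarith [ht']
    have h1 : (i:ℝ)/(m:ℝ) ≤ t := by
      rw [div_le_iff₀ hM]
      nlinarith [htk]
    have h2 : t ≤ ((i:ℝ)+1)/(m:ℝ) := by
      rw [le_div_iff₀ hM]
      nlinarith [htk']
    have hstep := hGeq i him t h1 h2
    set s := (m:ℝ) * t - i with hs
    have hs1 : (k':ℝ)/(m:ℝ)^n ≤ s := by
      rw [div_le_iff₀ hMn, hs]
      nlinarith [htk]
    have hs2 : s ≤ ((k':ℝ)+1)/(m:ℝ)^n := by
      rw [le_div_iff₀ hMn, hs]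
      nlinarith [htk']
    have hIH := ih k' hk'n s hs1 hs2
    have harg : (m:ℝ)^n * s - k' = (m:ℝ)^(n+1)*t - k := by
      rw [hs, hikR]; ring
    -- the constant
    have ht0 : (k:ℝ)/(m:ℝ)^(n+1) ≤ (k:ℝ)/(m:ℝ)^(n+1) := le_refl _
    have h01 : (i:ℝ)/(m:ℝ) ≤ (k:ℝ)/(m:ℝ)^(n+1) := by
      rw [div_le_div_iff₀ hM hMn1, hikR, hps]
      nlinarith [mul_nonneg (Nat.cast_nonneg k' : (0:ℝ) ≤ (k':ℝ)) hM.le]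
    have h02 : (k:ℝ)/(m:ℝ)^(n+1) ≤ ((i:ℝ)+1)/(m:ℝ) := by
      rw [div_le_div_iff₀ hMn1 hM, hikR, hps]
      have hh : (m:ℝ) * ((k':ℝ)+1) ≤ (m:ℝ) * (m:ℝ)^n :=
        mul_le_mul_of_nonneg_left hk'R hM.le
      linarith [hh]
    have hconst := hGeq i him ((k:ℝ)/(m:ℝ)^(n+1)) h01 h02
    have harg0 : (m:ℝ) * ((k:ℝ)/(m:ℝ)^(n+1)) - i = (k':ℝ)/(m:ℝ)^n := by
      rw [hikR]; field_simp; ring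
    rw [harg0] at hconst
    have hmu : mu m a (n+1) k = a i * mu m a n k' := rfl
    rw [hstep, hconst]
    simp only [fBern]
    rw [hIH, harg, hmu]
    ring


section
variable (hm : 2 ≤ m) (ha : ∀ i < m, a i ∈ Set.Ioo (0 : ℝ) 1)
  (hGc : ContinuousOn G (Set.Icc 0 1))
  (hGX : Set.MapsTo G (Set.Icc 0 1) (Set.Icc 0 1))
  (hGeq : ∀ i < m, ∀ t : ℝ, (i : ℝ) / m ≤ t → t ≤ ((i : ℝ) + 1) / m →
      G t = fBern a i (G ((m : ℝ) * t - i)))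
  (hG0 : G 0 = 0) (hG1 : G 1 = 1)

include hm hGeq hG0 hG1 in
lemma diff_eq {n k : ℕ} (hk : k < m^n) :
    G (((k:ℝ)+1)/(m:ℝ)^n) = mu m a n k + G ((k:ℝ)/(m:ℝ)^n) := by
  have hMn : (0:ℝ) < (m:ℝ)^n := by
    have : (0:ℝ) < (m:ℝ) := by exact_mod_cast (by omega : 0 < m)
    positivity
  have h := key hm hGeq hG0 n k hk (((k:ℝ)+1)/(m:ℝ)^n) (by gcongr <;> linarith) le_rfl
  rw [h]
  have harg : (m:ℝ)^n * (((k:ℝ)+1)/(m:ℝ)^n) - k = 1 := by field_simp; ring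
  rw [harg, hG1, mul_one]

include hm ha hGX hGeq hG0 in
lemma G_bounds {n k : ℕ} (hk : k < m^n) {t : ℝ}
    (ht : (k:ℝ)/(m:ℝ)^n ≤ t) (ht' : t ≤ ((k:ℝ)+1)/(m:ℝ)^n) :
    G ((k:ℝ)/(m:ℝ)^n) ≤ G t ∧ G t ≤ G ((k:ℝ)/(m:ℝ)^n) + mu m a n k := by
  have hMn : (0:ℝ) < (m:ℝ)^n := by
    have : (0:ℝ) < (m:ℝ) := by exact_mod_cast (by omega : 0 < m)
    positivity
  have h := key hm hGeq hG0 n k hk t ht ht'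
  have harg : (m:ℝ)^n * t - k ∈ Set.Icc (0:ℝ) 1 := by
    constructor
    · rw [div_le_iff₀ hMn] at ht; linarith
    · rw [le_div_iff₀ hMn] at ht'; linarith
  have hGr := hGX harg
  have hmu : 0 < mu m a n k := mu_pos hm (fun i hi => (ha i hi).1) n k hk
  rw [h]
  constructor
  · nlinarith [hGr.1, hmu.le]
  · nlinarith [hGr.2, hmu.le]

include hm ha hGeq hG0 hG1 in
lemma grid_mono {n j k : ℕ} (hjk : j ≤ k) (hk : k ≤ m^n) :
    G ((j:ℝ)/(m:ℝ)^n) ≤ G ((k:ℝ)/(m:ℝ)^n) := by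
  obtain ⟨d, rfl⟩ := Nat.exists_eq_add_of_le hjk
  clear hjk
  induction d with
  | zero => simp
  | succ d ih =>
    have h1 : j + d < m^n := by omega
    have h2 := diff_eq hm hGeq hG0 hG1 (a := a) h1
    have hmu : 0 < mu m a n (j+d) := mu_pos hm (fun i hi => (ha i hi).1) n _ h1
    have hc : ((j:ℝ) + (d:ℝ) + 1) = (((j + (d+1) : ℕ)):ℝ) := by push_cast; ring
    have hc2 : (((j + d : ℕ)):ℝ) = (j:ℝ) + (d:ℝ) := by push_cast; ring
    rw [hc2, hc] at h2
    have := ih (by omega)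
    rw [hc2] at this
    linarith

include hm ha hGX hGeq hG0 hG1 in
lemma G_monoOn : MonotoneOn G (Set.Icc (0:ℝ) 1) := by
  have hM1 : (1:ℝ) < (m:ℝ) := by exact_mod_cast (by omega : 1 < m)
  have hM : (0:ℝ) < (m:ℝ) := by linarith
  rintro s ⟨hs0, hs1⟩ t ⟨ht0, ht1⟩ hst
  rcases eq_or_lt_of_le hst with rfl | hlt
  · exact le_rfl
  rcases eq_or_lt_of_le ht1 with rfl | ht1'
  · exact (hGX ⟨hs0, hs1⟩).2.trans_eq hG1.symm
  -- now s < t < 1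
  obtain ⟨n, hn⟩ := pow_unbounded_of_one_lt ((t - s)⁻¹) hM1
  have hMn : (0:ℝ) < (m:ℝ)^n := by positivity
  have htspos : (0:ℝ) < t - s := sub_pos.2 hlt
  have hts : 1 < (m:ℝ)^n * (t - s) := by
    calc (1:ℝ) = (t-s)⁻¹ * (t-s) := (inv_mul_cancel₀ (ne_of_gt htspos)).symm
    _ < (m:ℝ)^n * (t-s) := mul_lt_mul_of_pos_right hn htspos
  set ks := ⌊(m:ℝ)^n * s⌋₊ with hksdef
  set kt := ⌊(m:ℝ)^n * t⌋₊ with hktdef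
  have hs00 : (0:ℝ) ≤ (m:ℝ)^n * s := by positivity
  have ht00 : (0:ℝ) ≤ (m:ℝ)^n * t := by positivity
  have hks_le : (ks:ℝ) ≤ (m:ℝ)^n * s := Nat.floor_le hs00
  have hkt_le : (kt:ℝ) ≤ (m:ℝ)^n * t := Nat.floor_le ht00
  have hks_lt : (m:ℝ)^n * s < (ks:ℝ) + 1 := Nat.lt_floor_add_one _
  have hkt_lt : (m:ℝ)^n * t < (kt:ℝ) + 1 := Nat.lt_floor_add_one _
  have hktm : kt < m^n := by
    rw [hktdef, Nat.floor_lt ht00]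
    push_cast
    nlinarith
  have hksm : ks < m^n := by
    rw [hksdef, Nat.floor_lt hs00]
    push_cast
    nlinarith
  have hkskt : ks + 1 ≤ kt := by
    have : (ks:ℝ) + 1 < (kt:ℝ) + 1 := by nlinarith
    have h2 : (ks:ℝ) < (kt:ℝ) := by linarith
    exact_mod_cast Nat.succ_le_of_lt (by exact_mod_cast h2)
  -- s in the ks interval
  have hsi1 : (ks:ℝ)/(m:ℝ)^n ≤ s := by rw [div_le_iff₀ hMn]; linarith
  have hsi2 : s ≤ ((ks:ℝ)+1)/(m:ℝ)^n := by rw [le_div_iff₀ hMn]; linarith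
  have hti1 : (kt:ℝ)/(m:ℝ)^n ≤ t := by rw [div_le_iff₀ hMn]; linarith
  have hti2 : t ≤ ((kt:ℝ)+1)/(m:ℝ)^n := by rw [le_div_iff₀ hMn]; linarith
  have hb1 := (G_bounds hm ha hGX hGeq hG0 hksm hsi1 hsi2).2
  have hb2 := (G_bounds hm ha hGX hGeq hG0 hktm hti1 hti2).1
  have hd := diff_eq hm hGeq hG0 hG1 (a := a) hksm
  have hg := grid_mono hm ha hGeq hG0 hG1 (n := n) (j := ks + 1) (k := kt) hkskt hktm.le
  have hcast : ((ks:ℝ) + 1) = (((ks + 1 : ℕ)):ℝ) := by push_cast; ring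
  rw [hcast] at hd
  calc G s ≤ G ((ks:ℝ)/(m:ℝ)^n) + mu m a n ks := hb1
  _ = G ((((ks + 1 : ℕ)):ℝ)/(m:ℝ)^n) := by rw [hd]; ring
  _ ≤ G ((kt:ℝ)/(m:ℝ)^n) := hg
  _ ≤ G t := hb2
end


lemma fBern_deriv (a : ℕ → ℝ) (i : ℕ) (x : ℝ) : deriv (fBern a i) x = a i := by
  have h : HasDerivAt (fBern a i) (a i) x := by
    have := ((hasDerivAt_id x).const_mul (a i)).add_const (∑ j ∈ Finset.range i, a j)
    rw [mul_one] at this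
    exact this
  exact h.deriv

lemma alpha_eq (hm : 2 ≤ m) (ha : ∀ i < m, a i ∈ Set.Ioo (0:ℝ) 1) (G : ℝ → ℝ) :
    alphaBern m a G = -(1/m:ℝ) * ∑ i ∈ Finset.range m, Real.logb m (a i) := by
  have hM : (0:ℝ) < (m:ℝ) := by exact_mod_cast (by omega : 0 < m)
  have hIco : Set.Ico (0:ℝ) 1 = ⋃ i ∈ Finset.range m,
      Set.Ico ((i:ℝ)/m) (((i:ℝ)+1)/m) := by
    ext t
    simp only [Set.mem_iUnion, Finset.mem_range, Set.mem_Ico]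
    constructor
    · rintro ⟨ht0, ht1⟩
      have h0 : (0:ℝ) ≤ (m:ℝ) * t := by nlinarith
      refine ⟨⌊(m:ℝ)*t⌋₊, ?_, ?_, ?_⟩
      · rw [Nat.floor_lt h0]; nlinarith
      · rw [div_le_iff₀ hM]; have := Nat.floor_le h0; linarith
      · rw [lt_div_iff₀ hM]; have := Nat.lt_floor_add_one ((m:ℝ)*t); linarith
    · rintro ⟨i, him, hti1, hti2⟩
      constructor
      · have : (0:ℝ) ≤ (i:ℝ)/m := by positivity
        linarith
      · have h2 : ((i:ℝ)+1)/m ≤ 1 := by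
          rw [div_le_one hM]
          have : (i:ℝ)+1 ≤ (m:ℝ) := by exact_mod_cast him
          linarith
        linarith
  have hptwise : ∀ i < m, ∀ t ∈ Set.Ico ((i:ℝ)/m) (((i:ℝ)+1)/m),
      -Real.logb m |deriv (fBern a (A1 m t)) (G (Hmap m t))| = -Real.logb m (a i) := by
    intro i him t ht
    have h1 : (i:ℝ) ≤ (m:ℝ)*t := by
      have := ht.1; rw [div_le_iff₀ hM] at this; linarith
    have h2 : (m:ℝ)*t < (i:ℝ)+1 := by
      have := ht.2; rw [lt_div_iff₀ hM] at this; linarith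
    have hfl : ⌊(m:ℝ)*t⌋ = (i:ℤ) := by
      rw [Int.floor_eq_iff]
      constructor
      · exact_mod_cast h1
      · push_cast; linarith
    have hA1 : A1 m t = i := by rw [A1, hfl]; simp
    rw [hA1, fBern_deriv, abs_of_pos (ha i him).1]
  rw [alphaBern, hIco, integral_biUnion_finset]
  · rw [show -(1/(m:ℝ)) * ∑ i ∈ Finset.range m, Real.logb m (a i)
        = ∑ i ∈ Finset.range m, ((1:ℝ)/m) * (-Real.logb m (a i)) by
      rw [Finset.mul_sum]
      apply Finset.sum_congr rfl
      intros; ring]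
    apply Finset.sum_congr rfl
    intro i hi
    rw [Finset.mem_range] at hi
    rw [setIntegral_congr_fun measurableSet_Ico (hptwise i hi), setIntegral_const,
      Real.volume_real_Ico, show ((i:ℝ)+1)/m - (i:ℝ)/m = 1/m by ring,
      max_eq_left (by positivity), smul_eq_mul]
  · exact fun i _ => measurableSet_Ico
  · intro i hi j hj hij
    simp only [Function.onFun]
    have key : ∀ u v : ℕ, u < v → Disjoint (Set.Ico ((u:ℝ)/m) (((u:ℝ)+1)/m))
        (Set.Ico ((v:ℝ)/m) (((v:ℝ)+1)/m)) := by
      intro u v h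
      rw [Set.disjoint_left]
      rintro x ⟨_, hx2⟩ ⟨hx3, _⟩
      have : ((u:ℝ)+1)/m ≤ (v:ℝ)/m := by
        gcongr
        exact_mod_cast h
      linarith
    rcases hij.lt_or_gt with h | h
    · exact key i j h
    · exact (key j i h).symm
  · intro i hi
    simp only [Finset.mem_range] at hi
    have hconst : IntegrableOn (fun _ : ℝ => -Real.logb m (a i))
        (Set.Ico ((i:ℝ)/m) (((i:ℝ)+1)/m)) volume := by
      exact integrableOn_const measure_Ico_lt_top.ne
    exact hconst.congr_fun (fun t ht => (hptwise i hi t ht).symm) measurableSet_Ico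

section
variable (hm : 2 ≤ m) (ha : ∀ i < m, a i ∈ Set.Ioo (0:ℝ) 1)
  (hsum : ∑ i ∈ Finset.range m, a i = 1)

include hm ha hsum

lemma jensen_setup :
    (∀ i ∈ Finset.range m, (0:ℝ) < 1/(m:ℝ)) ∧
    (∑ _i ∈ Finset.range m, (1:ℝ)/(m:ℝ)) = 1 ∧
    (∑ i ∈ Finset.range m, ((1:ℝ)/(m:ℝ)) • a i) = 1/(m:ℝ) := by
  have hM : (0:ℝ) < (m:ℝ) := by exact_mod_cast (by omega : 0 < m)
  refine ⟨fun i _ => by positivity, ?_, ?_⟩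
  · rw [Finset.sum_const, Finset.card_range, nsmul_eq_mul]
    field_simp
  · simp only [smul_eq_mul]
    rw [← Finset.mul_sum, hsum, mul_one]

lemma jensen_log : ∑ i ∈ Finset.range m, Real.log (a i) ≤ (m:ℝ) * Real.log (1/(m:ℝ)) := by
  have hM : (0:ℝ) < (m:ℝ) := by exact_mod_cast (by omega : 0 < m)
  obtain ⟨h₀, h₁, hw⟩ := jensen_setup hm ha hsum
  have h := (strictConcaveOn_log_Ioi.concaveOn).le_map_sum (fun i hi => (h₀ i hi).le) h₁
    (fun i hi => (ha i (Finset.mem_range.1 hi)).1)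
  rw [hw] at h
  simp only [smul_eq_mul] at h
  rw [← Finset.mul_sum] at h
  have h2 := mul_le_mul_of_nonneg_left h hM.le
  have h3 : (m:ℝ) * ((1/(m:ℝ)) * ∑ i ∈ Finset.range m, Real.log (a i))
      = ∑ i ∈ Finset.range m, Real.log (a i) := by field_simp
  linarith

lemma jensen_log_eq_iff :
    (∑ i ∈ Finset.range m, Real.log (a i) = (m:ℝ) * Real.log (1/(m:ℝ)))
      ↔ ∀ i < m, a i = 1/(m:ℝ) := by
  have hM : (0:ℝ) < (m:ℝ) := by exact_mod_cast (by omega : 0 < m)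
  obtain ⟨h₀, h₁, hw⟩ := jensen_setup hm ha hsum
  have hiff := strictConcaveOn_log_Ioi.map_sum_eq_iff h₀ h₁
    (fun i hi => (ha i (Finset.mem_range.1 hi)).1)
  rw [hw] at hiff
  have hsum2 : ∑ i ∈ Finset.range m, ((1:ℝ)/(m:ℝ)) • Real.log (a i)
      = (1/(m:ℝ)) * ∑ i ∈ Finset.range m, Real.log (a i) := by
    simp only [smul_eq_mul]
    rw [Finset.mul_sum]
  rw [hsum2] at hiff
  constructor
  · intro hT
    have : Real.log (1/(m:ℝ)) = (1/(m:ℝ)) * ∑ i ∈ Finset.range m, Real.log (a i) := by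
      rw [hT]; field_simp
    intro i him
    exact hiff.1 this i (Finset.mem_range.2 him)
  · intro hall
    have : ∀ i ∈ Finset.range m, Real.log (a i) = Real.log (1/(m:ℝ)) := by
      intro i hi; rw [hall i (Finset.mem_range.1 hi)]
    rw [Finset.sum_congr rfl this, Finset.sum_const, Finset.card_range, nsmul_eq_mul]

lemma sqrt_strict (hne : ∃ i < m, a i ≠ 1/(m:ℝ)) :
    ∑ i ∈ Finset.range m, Real.sqrt (a i) < Real.sqrt m := by
  have hM : (0:ℝ) < (m:ℝ) := by exact_mod_cast (by omega : 0 < m)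
  have hsqM : (0:ℝ) < Real.sqrt m := Real.sqrt_pos.2 hM
  obtain ⟨h₀, h₁, hw⟩ := jensen_setup hm ha hsum
  have hp : ∃ j ∈ Finset.range m, ∃ k ∈ Finset.range m, a j ≠ a k := by
    obtain ⟨i0, hi0m, hne0⟩ := hne
    by_cases hall : ∀ j < m, a j = a i0
    · exfalso
      apply hne0
      have : ∑ i ∈ Finset.range m, a i = (m:ℝ) * a i0 := by
        rw [Finset.sum_congr rfl (fun i hi => hall i (Finset.mem_range.1 hi)),
          Finset.sum_const, Finset.card_range, nsmul_eq_mul]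
      rw [hsum] at this
      field_simp
      linarith [this]
    · push_neg at hall
      obtain ⟨j, hjm, hja⟩ := hall
      exact ⟨j, Finset.mem_range.2 hjm, i0, Finset.mem_range.2 hi0m, hja⟩
  have hcc := Real.strictConcaveOn_rpow (by norm_num : (0:ℝ) < 1/2) (by norm_num : (1:ℝ)/2 < 1)
  have hlt := hcc.lt_map_sum h₀ h₁ (fun i hi => (ha i (Finset.mem_range.1 hi)).1.le) hp
  rw [hw] at hlt
  simp only [smul_eq_mul] at hlt
  have hrw : ∀ i ∈ Finset.range m, (1/(m:ℝ)) * (a i) ^ ((1:ℝ)/2)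
      = (1/(m:ℝ)) * Real.sqrt (a i) := by
    intro i hi
    rw [← Real.sqrt_eq_rpow]
  rw [Finset.sum_congr rfl hrw, ← Finset.mul_sum, ← Real.sqrt_eq_rpow] at hlt
  have hinv : Real.sqrt (1/(m:ℝ)) = 1 / Real.sqrt m := by
    rw [one_div, one_div, Real.sqrt_inv]
  rw [hinv] at hlt
  -- (1/m) * S < 1/√m  →  S < √m
  have hms : Real.sqrt m * Real.sqrt m = (m:ℝ) := Real.mul_self_sqrt hM.le
  have h2 := mul_lt_mul_of_pos_left hlt hM
  have h3 : (m:ℝ) * ((1/(m:ℝ)) * ∑ i ∈ Finset.range m, Real.sqrt (a i))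
      = ∑ i ∈ Finset.range m, Real.sqrt (a i) := by field_simp
  have h4 : (m:ℝ) * (1/Real.sqrt m) = Real.sqrt m := by
    rw [mul_one_div, div_eq_iff (ne_of_gt hsqM)]
    exact hms.symm
  linarith

end

end BernAux

lemma slope_lim {g : ℝ → ℝ} {t L : ℝ} (h : HasDerivAt g L t) {x y : ℕ → ℝ}
    (hx : ∀ n, x n ≤ t) (hy : ∀ n, t ≤ y n) (hlt : ∀ n, x n < y n)
    (hxy : Filter.Tendsto (fun n => y n - x n) atTop (𝓝 0)) :
    Filter.Tendsto (fun n => (g (y n) - g (x n)) / (y n - x n)) atTop (𝓝 L) := by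
  rw [Metric.tendsto_atTop]
  intro ε hε
  have hO := (hasDerivAt_iff_isLittleO.mp h).def (by positivity : (0:ℝ) < ε/4)
  rw [Metric.eventually_nhds_iff] at hO
  obtain ⟨δ, hδ, hball⟩ := hO
  obtain ⟨N, hN⟩ := Metric.tendsto_atTop.mp hxy δ hδ
  refine ⟨N, fun n hn => ?_⟩
  have hw : 0 < y n - x n := sub_pos.2 (hlt n)
  have hwδ : y n - x n < δ := by
    have := hN n hn
    rw [Real.dist_eq, sub_zero, abs_of_pos hw] at this
    exact this
  have hdx : dist (x n) t < δ := by
    rw [Real.dist_eq, abs_of_nonpos (by linarith [hx n])]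
    linarith [hy n]
  have hdy : dist (y n) t < δ := by
    rw [Real.dist_eq, abs_of_nonneg (by linarith [hy n])]
    linarith [hx n]
  have h1 := hball hdy
  have h2 := hball hdx
  simp only [Real.norm_eq_abs, smul_eq_mul] at h1 h2
  have hay : |y n - t| ≤ y n - x n := by
    rw [abs_of_nonneg (by linarith [hy n])]; linarith [hx n]
  have hax : |x n - t| ≤ y n - x n := by
    rw [abs_of_nonpos (by linarith [hx n])]; linarith [hy n]
  have hkey : |g (y n) - g (x n) - (y n - x n) * L| ≤ ε/2 * (y n - x n) := by
    have : g (y n) - g (x n) - (y n - x n) * L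
        = (g (y n) - g t - (y n - t) * L) - (g (x n) - g t - (x n - t) * L) := by ring
    rw [this]
    calc |(g (y n) - g t - (y n - t) * L) - (g (x n) - g t - (x n - t) * L)|
        ≤ |g (y n) - g t - (y n - t) * L| + |g (x n) - g t - (x n - t) * L| := abs_sub _ _
    _ ≤ ε/4 * |y n - t| + ε/4 * |x n - t| := add_le_add h1 h2
    _ ≤ ε/4 * (y n - x n) + ε/4 * (y n - x n) := by
        have e1 : ε/4 * |y n - t| ≤ ε/4 * (y n - x n) :=
          mul_le_mul_of_nonneg_left hay (by positivity)
        have e2 : ε/4 * |x n - t| ≤ ε/4 * (y n - x n) :=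
          mul_le_mul_of_nonneg_left hax (by positivity)
        linarith
    _ = ε/2 * (y n - x n) := by ring
  rw [Real.dist_eq]
  have : (g (y n) - g (x n)) / (y n - x n) - L
      = (g (y n) - g (x n) - (y n - x n) * L) / (y n - x n) := by
    field_simp
  rw [this, abs_div, abs_of_pos hw]
  rw [div_lt_iff₀ hw]
  calc |g (y n) - g (x n) - (y n - x n) * L| ≤ ε/2 * (y n - x n) := hkey
  _ < ε * (y n - x n) := by nlinarith

/-- **Example 2.1 (ii): Bernoulli measures and Lebesgue singular functions.**
Let `m ≥ 2`, `a_0, …, a_{m-1} ∈ (0,1)` with `∑ a_i = 1`, and `f_i(x) = a_i x + ∑_{j<i} a_j`.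
For the unique continuous solution `G` of de Rham's equation:
`α = -(1/m) ∑_{i<m} log_m a_i`, `α ≥ 1` with equality iff `a_i = 1/m` for all `i < m`,
and if some `a_i ≠ 1/m` then `G` is increasing with `G'(t) = 0` Lebesgue-a.e., i.e. `G`
is a singular function. -/
theorem bernoulli_deRham_singular (m : ℕ) (hm : 2 ≤ m) (a : ℕ → ℝ)
    (ha : ∀ i < m, a i ∈ Set.Ioo (0 : ℝ) 1)
    (hsum : ∑ i ∈ Finset.range m, a i = 1)
    (G : ℝ → ℝ)
    (hGc : ContinuousOn G (Set.Icc 0 1))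
    (hGX : Set.MapsTo G (Set.Icc 0 1) (Set.Icc 0 1))
    (hGeq : ∀ i < m, ∀ t : ℝ, (i : ℝ) / m ≤ t → t ≤ ((i : ℝ) + 1) / m →
      G t = fBern a i (G ((m : ℝ) * t - i)))
    (hG0 : G 0 = 0) (hG1 : G 1 = 1) :
    alphaBern m a G = -(1 / m : ℝ) * ∑ i ∈ Finset.range m, Real.logb m (a i) ∧
    1 ≤ alphaBern m a G ∧
    (alphaBern m a G = 1 ↔ ∀ i < m, a i = 1 / m) ∧
    ((∃ i < m, a i ≠ 1 / m) →
      MonotoneOn G (Set.Icc (0 : ℝ) 1) ∧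
      ∀ᵐ t ∂(volume.restrict (Set.Ioo (0 : ℝ) 1)),
        HasDerivWithinAt G 0 (Set.Icc (0 : ℝ) 1) t) := by
  have hM : (0:ℝ) < (m:ℝ) := by exact_mod_cast (by omega : 0 < m)
  have hM1 : (1:ℝ) < (m:ℝ) := by exact_mod_cast (by omega : 1 < m)
  have hlogM : (0:ℝ) < Real.log m := Real.log_pos hM1
  have halpha : alphaBern m a G = -(1/m:ℝ) * ∑ i ∈ Finset.range m, Real.logb m (a i) :=
    BernAux.alpha_eq hm ha G
  have hlogb : ∑ i ∈ Finset.range m, Real.logb m (a i)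
      = (∑ i ∈ Finset.range m, Real.log (a i)) / Real.log m := by
    rw [Finset.sum_div]
    simp only [Real.logb]
  have hjen := BernAux.jensen_log hm ha hsum
  have hlog1m : Real.log (1/(m:ℝ)) = -Real.log m := by rw [one_div, Real.log_inv]
  rw [hlog1m] at hjen
  have hαval : alphaBern m a G
      = (-(∑ i ∈ Finset.range m, Real.log (a i)))/((m:ℝ) * Real.log m) := by
    rw [halpha, hlogb]; ring
  refine ⟨halpha, ?_, ?_, ?_⟩
  · rw [hαval, le_div_iff₀ (by positivity)]
    nlinarith [hjen]
  · rw [hαval]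
    constructor
    · intro h1
      rw [div_eq_one_iff_eq (by positivity : (m:ℝ) * Real.log m ≠ 0)] at h1
      have hTeq : ∑ i ∈ Finset.range m, Real.log (a i) = (m:ℝ) * Real.log (1/(m:ℝ)) := by
        rw [hlog1m]; linarith
      exact (BernAux.jensen_log_eq_iff hm ha hsum).1 hTeq
    · intro hall
      have hTeq := (BernAux.jensen_log_eq_iff hm ha hsum).2 hall
      rw [hTeq, hlog1m]
      field_simp
  · intro hne
    have hmono := BernAux.G_monoOn hm ha hGX hGeq hG0 hG1
    refine ⟨hmono, ?_⟩
    set g : ℝ → ℝ := fun u => G (min 1 (max 0 u)) with hgdef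
    have hmem : ∀ u : ℝ, min 1 (max 0 u) ∈ Set.Icc (0:ℝ) 1 := by
      intro u
      exact ⟨le_min zero_le_one (le_max_left 0 u), min_le_left _ _⟩
    have hgeq' : ∀ u ∈ Set.Icc (0:ℝ) 1, g u = G u := by
      intro u hu
      show G (min 1 (max 0 u)) = G u
      rw [max_eq_right hu.1, min_eq_right hu.2]
    have hgmono : Monotone g := by
      intro u v huv
      apply hmono (hmem u) (hmem v)
      gcongr
    have hdiff := hgmono.ae_differentiableAt
    have hS := BernAux.sqrt_strict hm ha hsum hne
    have hMn0 := BernAux.ae_tendsto_Mn hm ha hS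
    filter_upwards [ae_restrict_of_ae hdiff, hMn0, ae_restrict_mem measurableSet_Ioo]
      with t hdt hMt ht
    have hL := hdt.hasDerivAt
    have hMn : ∀ n : ℕ, (0:ℝ) < (m:ℝ)^n := fun n => by positivity
    have hfl : ∀ n : ℕ, (0:ℝ) ≤ (m:ℝ)^n * t := by
      intro n
      nlinarith [ht.1, hMn n]
    have hMlt : ∀ n : ℕ, ⌊(m:ℝ)^n * t⌋₊ < m^n := by
      intro n
      rw [Nat.floor_lt (hfl n)]
      push_cast
      nlinarith [ht.2, hMn n]
    set x : ℕ → ℝ := fun n => ((⌊(m:ℝ)^n * t⌋₊ : ℝ)) / (m:ℝ)^n with hxdef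
    set y : ℕ → ℝ := fun n => ((⌊(m:ℝ)^n * t⌋₊ : ℝ) + 1) / (m:ℝ)^n with hydef
    have hx : ∀ n, x n ≤ t := by
      intro n
      show ((⌊(m:ℝ)^n * t⌋₊ : ℝ)) / (m:ℝ)^n ≤ t
      rw [div_le_iff₀ (hMn n)]
      have := Nat.floor_le (hfl n)
      linarith
    have hy : ∀ n, t ≤ y n := by
      intro n
      show t ≤ ((⌊(m:ℝ)^n * t⌋₊ : ℝ) + 1) / (m:ℝ)^n
      rw [le_div_iff₀ (hMn n)]
      have := Nat.lt_floor_add_one ((m:ℝ)^n * t)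
      linarith
    have hlt : ∀ n, x n < y n := by
      intro n
      show ((⌊(m:ℝ)^n * t⌋₊ : ℝ)) / (m:ℝ)^n < ((⌊(m:ℝ)^n * t⌋₊ : ℝ) + 1) / (m:ℝ)^n
      apply (div_lt_div_iff_of_pos_right (hMn n)).2
      linarith
    have hwidth_eq : ∀ n, y n - x n = ((m:ℝ)⁻¹)^n := by
      intro n
      show ((⌊(m:ℝ)^n * t⌋₊ : ℝ) + 1) / (m:ℝ)^n - ((⌊(m:ℝ)^n * t⌋₊ : ℝ)) / (m:ℝ)^n
        = ((m:ℝ)⁻¹)^n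
      rw [inv_pow]
      field_simp; ring
    have hwidth : Filter.Tendsto (fun n => y n - x n) atTop (𝓝 0) := by
      rw [show (fun n => y n - x n) = fun n => ((m:ℝ)⁻¹)^n from funext hwidth_eq]
      apply tendsto_pow_atTop_nhds_zero_of_lt_one (by positivity)
      exact inv_lt_one_of_one_lt₀ hM1
    have hslope := slope_lim hL hx hy hlt hwidth
    have hx01 : ∀ n, x n ∈ Set.Icc (0:ℝ) 1 := by
      intro n
      refine ⟨?_, le_trans (hx n) (le_of_lt ht.2)⟩
      show (0:ℝ) ≤ ((⌊(m:ℝ)^n * t⌋₊ : ℝ)) / (m:ℝ)^n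
      positivity
    have hy01 : ∀ n, y n ∈ Set.Icc (0:ℝ) 1 := by
      intro n
      constructor
      · show (0:ℝ) ≤ ((⌊(m:ℝ)^n * t⌋₊ : ℝ) + 1) / (m:ℝ)^n
        positivity
      · show ((⌊(m:ℝ)^n * t⌋₊ : ℝ) + 1) / (m:ℝ)^n ≤ 1
        rw [div_le_one (hMn n)]
        have hc : ((⌊(m:ℝ)^n * t⌋₊ : ℝ)) + 1 ≤ ((m^n : ℕ) : ℝ) := by
          exact_mod_cast hMlt n
        push_cast at hc
        linarith
    have hslope_eq : ∀ n, (g (y n) - g (x n)) / (y n - x n)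
        = BernAux.mu m a n ⌊(m:ℝ)^n * t⌋₊ * (m:ℝ)^n := by
      intro n
      rw [hgeq' _ (hy01 n), hgeq' _ (hx01 n), hwidth_eq n]
      have hd := BernAux.diff_eq hm hGeq hG0 hG1 (a := a) (hMlt n)
      show (G (((⌊(m:ℝ)^n * t⌋₊ : ℝ) + 1) / (m:ℝ)^n)
          - G (((⌊(m:ℝ)^n * t⌋₊ : ℝ)) / (m:ℝ)^n)) / ((m:ℝ)⁻¹)^n
        = BernAux.mu m a n ⌊(m:ℝ)^n * t⌋₊ * (m:ℝ)^n
      rw [hd, inv_pow, add_sub_cancel_right, div_eq_mul_inv, inv_inv]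
    have hL0 : deriv g t = 0 := tendsto_nhds_unique (hslope.congr hslope_eq) hMt
    have hgd : HasDerivAt g 0 t := hL0 ▸ hL
    have hgdw := hgd.hasDerivWithinAt (s := Set.Icc (0:ℝ) 1)
    apply hgdw.congr
    · intro u hu
      exact (hgeq' u hu).symm
    · exact (hgeq' t ⟨le_of_lt ht.1, le_of_lt ht.2⟩).symm
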